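/- arXiv:2504.02309 — 4 statements merged into one kernel-verified Lean document; each statement's English description precedes it below -/
import Mathlib

section
/- For any positive integers m, n with n ≥ 2, any 1 ≤ i ≤ m, and any fixed subset S of the n-th column of K_m × P_n with |S| = i, the number f of connected sets of K_m × P_n containing at least one vertex in each column and whose intersection with the n-th column equals S satisfies the recurrence f_{m,n}^i = Σ_{j=1}^{m-i} (C(m,j) - C(m-i,j)) · f_{m,n-1}^j + Σ_{j=m-i+1}^{m} C(m,j) · f_{m,n-1}^j, where f_{m,n}^i depends only on i (and not on the choice of S) and f_{m,1}^i = 1 for all i. -/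
open SimpleGraph Matrix

/-- The grid graph P_m × P_n on vertex set Fin m × Fin n. -/
def gridG (m n : ℕ) : SimpleGraph (Fin m × Fin n) :=
  SimpleGraph.fromRel (fun v w =>
    (v.2 = w.2 ∧ (v.1 : ℕ) + 1 = (w.1 : ℕ)) ∨ (v.1 = w.1 ∧ (v.2 : ℕ) + 1 = (w.2 : ℕ)))

/-- The graph K_m × P_n on vertex set Fin m × Fin n. -/
def compG (m n : ℕ) : SimpleGraph (Fin m × Fin n) :=
  SimpleGraph.fromRel (fun v w =>
    (v.2 = w.2 ∧ v.1 ≠ w.1) ∨ (v.1 = w.1 ∧ (v.2 : ℕ) + 1 = (w.2 : ℕ)))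

/-- A connected set of a graph: a nonempty vertex subset inducing a connected subgraph. -/
def IsConnSet {V : Type} (G : SimpleGraph V) (C : Finset V) : Prop :=
  (C : Set V).Nonempty ∧ (G.induce (C : Set V)).Connected

/-- N(G): the number of connected sets of G. -/
noncomputable def NconnSets (V : Type) [Fintype V] (G : SimpleGraph V) : ℕ :=
  Nat.card {C : Finset V // IsConnSet G C}

/-- Number of connected sets of K_m × P_n meeting every column whose intersection
with the last column is { (i, n-1) : i ∈ S }. -/
noncomputable def Fcnt (m n : ℕ) (S : Finset (Fin m)) : ℕ :=
  Nat.card {C : Finset (Fin m × Fin n) //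
    IsConnSet (compG m n) C ∧ (∀ j : Fin n, ∃ i : Fin m, (i, j) ∈ C) ∧
      ∀ (i : Fin m) (j : Fin n), (j : ℕ) = n - 1 → ((i, j) ∈ C ↔ i ∈ S)}

/-- A canonical subset of Fin m of cardinality min j m. -/
def canon (m j : ℕ) : Finset (Fin m) :=
  Finset.univ.filter (fun a : Fin m => (a : ℕ) < j)

/-! ### Auxiliary machinery -/

lemma compG_adj {m n : ℕ} {v w : Fin m × Fin n} :
    (compG m n).Adj v w ↔ v ≠ w ∧ (v.2 = w.2 ∨
      (v.1 = w.1 ∧ ((v.2 : ℕ) + 1 = (w.2 : ℕ) ∨ (w.2 : ℕ) + 1 = (v.2 : ℕ)))) := by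
  unfold compG
  rw [SimpleGraph.fromRel_adj]
  constructor
  · rintro ⟨h1, h2⟩
    exact ⟨h1, by tauto⟩
  · rintro ⟨h1, h2⟩
    refine ⟨h1, ?_⟩
    rcases h2 with h | ⟨h, h'⟩
    · exact Or.inl (Or.inl ⟨h, fun hh => h1 (Prod.ext hh h)⟩)
    · tauto

/-- Good predicate: the conditions in `Fcnt`. -/
def Good (m n : ℕ) (S : Finset (Fin m)) (C : Finset (Fin m × Fin n)) : Prop :=
  IsConnSet (compG m n) C ∧ (∀ j : Fin n, ∃ i : Fin m, (i, j) ∈ C) ∧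
      ∀ (i : Fin m) (j : Fin n), (j : ℕ) = n - 1 → ((i, j) ∈ C ↔ i ∈ S)

lemma Fcnt_eq_card (m n : ℕ) (S : Finset (Fin m)) :
    Fcnt m n S = Nat.card {C : Finset (Fin m × Fin n) // Good m n S C} := rfl

/-- Transport of induced-subgraph connectivity along an injective adjacency-preserving map. -/
lemma connected_congr {V W : Type} {G : SimpleGraph V} {H : SimpleGraph W} (f : V → W)
    (hf : Function.Injective f) (hadj : ∀ a b, G.Adj a b ↔ H.Adj (f a) (f b)) (s : Set V) :
    (G.induce s).Connected ↔ (H.induce (f '' s)).Connected := by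
  refine SimpleGraph.Iso.connected_iff (G := G.induce s) (H := H.induce (f '' s))
    ⟨Equiv.Set.image f s hf, ?_⟩
  intro a b
  simp only [comap_adj, Function.Embedding.coe_subtype, Equiv.Set.image_apply]
  exact (hadj a b).symm

/-- A hom between induced subgraphs coming from an adjacency-preserving map. -/
def inducedHom {V W : Type} {G : SimpleGraph V} {H : SimpleGraph W} (f : V → W)
    (hadj : ∀ a b, G.Adj a b → H.Adj (f a) (f b)) (s : Set V) (t : Set W)
    (hst : ∀ a ∈ s, f a ∈ t) : G.induce s →g H.induce t where
  toFun := fun a => ⟨f a, hst a a.2⟩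
  map_rel' := fun h => hadj _ _ h

lemma induce_connected_of_clique {V : Type} {G : SimpleGraph V} {s : Set V}
    (hs : s.Nonempty) (h : ∀ u ∈ s, ∀ v ∈ s, u ≠ v → G.Adj u v) :
    (G.induce s).Connected := by
  rw [connected_iff_exists_forall_reachable]
  obtain ⟨v, hv⟩ := hs
  refine ⟨⟨v, hv⟩, fun w => ?_⟩
  by_cases hw : (⟨v, hv⟩ : ↥s) = w
  · exact hw ▸ SimpleGraph.Reachable.refl _
  · exact SimpleGraph.Adj.reachable (h v hv w w.2 (fun hh => hw (Subtype.ext hh)))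
/-! ### Column restriction / extension maps -/

def emb (m n : ℕ) (p : Fin m × Fin (n - 1)) : Fin m × Fin n :=
  (p.1, Fin.castLE (Nat.sub_le n 1) p.2)

lemma emb_injective (m n : ℕ) : Function.Injective (emb m n) := by
  rintro ⟨a, j⟩ ⟨b, k⟩ h
  simp only [emb, Prod.mk.injEq, Fin.castLE_inj] at h
  exact Prod.ext h.1 h.2

lemma emb_adj {m n : ℕ} (p q : Fin m × Fin (n - 1)) :
    (compG m (n - 1)).Adj p q ↔ (compG m n).Adj (emb m n p) (emb m n q) := by
  simp only [compG_adj, emb, ne_eq, Prod.ext_iff, Prod.mk.injEq, Fin.castLE_inj,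
    Fin.coe_castLE]

/-- restriction of a set to the first `n-1` columns. -/
def resC (m n : ℕ) (C : Finset (Fin m × Fin n)) : Finset (Fin m × Fin (n - 1)) :=
  Finset.univ.filter (fun p => emb m n p ∈ C)

lemma mem_resC {m n : ℕ} {C : Finset (Fin m × Fin n)} {p : Fin m × Fin (n - 1)} :
    p ∈ resC m n C ↔ emb m n p ∈ C := by simp [resC]

/-- the trace of a set on the second-to-last column. -/
def traceC (m n : ℕ) (hn : 2 ≤ n) (C : Finset (Fin m × Fin n)) : Finset (Fin m) :=
  Finset.univ.filter (fun a => (a, (⟨n - 2, by omega⟩ : Fin n)) ∈ C)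

lemma mem_traceC {m n : ℕ} {hn : 2 ≤ n} {C : Finset (Fin m × Fin n)} {a : Fin m} :
    a ∈ traceC m n hn C ↔ (a, (⟨n - 2, by omega⟩ : Fin n)) ∈ C := by simp [traceC]

/-- extension of a set by a last column `S`. -/
def extC (m n : ℕ) (hn : 2 ≤ n) (S : Finset (Fin m)) (C' : Finset (Fin m × Fin (n - 1))) :
    Finset (Fin m × Fin n) :=
  C'.image (emb m n) ∪ S.image (fun a => (a, (⟨n - 1, by omega⟩ : Fin n)))

lemma mem_extC {m n : ℕ} {hn : 2 ≤ n} {S : Finset (Fin m)} {C' : Finset (Fin m × Fin (n - 1))}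
    {v : Fin m × Fin n} :
    v ∈ extC m n hn S C' ↔ (∃ p ∈ C', emb m n p = v) ∨
      (v.1 ∈ S ∧ (v.2 : ℕ) = n - 1) := by
  simp only [extC, Finset.mem_union, Finset.mem_image]
  constructor
  · rintro (⟨p, hp, rfl⟩ | ⟨a, ha, rfl⟩)
    · exact Or.inl ⟨p, hp, rfl⟩
    · exact Or.inr ⟨ha, rfl⟩
  · rintro (⟨p, hp, rfl⟩ | ⟨ha, hv⟩)
    · exact Or.inl ⟨p, hp, rfl⟩
    · refine Or.inr ⟨v.1, ha, ?_⟩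
      have : v.2 = (⟨n - 1, by omega⟩ : Fin n) := Fin.ext hv
      rw [← this]
/-! ### Rerouting walks away from the last column -/

lemma same_col_reach {m n : ℕ} {s : Set (Fin m × Fin n)} (u v : ↥s)
    (h : (u : Fin m × Fin n).2 = (v : Fin m × Fin n).2) :
    ((compG m n).induce s).Reachable u v := by
  by_cases he : u = v
  · exact he ▸ SimpleGraph.Reachable.refl _
  · refine SimpleGraph.Adj.reachable ?_
    show (compG m n).Adj ↑u ↑v
    rw [compG_adj]
    exact ⟨fun hh => he (Subtype.ext hh), Or.inl h⟩

lemma walk_reroute {m n : ℕ} (hn : 2 ≤ n) (C : Finset (Fin m × Fin n))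
    (x y : ↥(C : Set (Fin m × Fin n)))
    (W : ((compG m n).induce (C : Set (Fin m × Fin n))).Walk x y)
    (hy : (((y : Fin m × Fin n).2 : ℕ)) ≠ n - 1) :
    ∃ u' : ↥{p : Fin m × Fin n | p ∈ C ∧ ((p.2 : ℕ)) ≠ n - 1},
      ((compG m n).induce {p : Fin m × Fin n | p ∈ C ∧ ((p.2 : ℕ)) ≠ n - 1}).Reachable
        u' ⟨↑y, ⟨y.2, hy⟩⟩ ∧
      ((u' : Fin m × Fin n) = ↑x ∨
        (((x : Fin m × Fin n).2 : ℕ) = n - 1 ∧ ((u' : Fin m × Fin n).2 : ℕ) = n - 2 ∧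
          (((u' : Fin m × Fin n).1, (⟨n - 1, by omega⟩ : Fin n)) ∈ C))) := by
  induction W with
  | @nil z =>
    exact ⟨⟨↑z, ⟨z.2, hy⟩⟩, SimpleGraph.Reachable.refl _, Or.inl rfl⟩
  | @cons x x₁ y hadj W ih =>
    obtain ⟨u', hr, hcase⟩ := ih hy
    have hadj' : (compG m n).Adj ↑x ↑x₁ := hadj
    rw [compG_adj] at hadj'
    obtain ⟨hne, hcol⟩ := hadj'
    have hx2 : ((x : Fin m × Fin n).2 : ℕ) < n := (x : Fin m × Fin n).2.isLt
    have hx12 : ((x₁ : Fin m × Fin n).2 : ℕ) < n := (x₁ : Fin m × Fin n).2.isLt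
    by_cases hx : ((x : Fin m × Fin n).2 : ℕ) = n - 1
    · -- x is in the last column
      rcases hcase with hcase | ⟨hx₁, hu2, hu1⟩
      · -- x₁ not in the last column
        have hx₁ : ((x₁ : Fin m × Fin n).2 : ℕ) ≠ n - 1 := by
          rw [← hcase]; exact u'.2.2
        have hrow : (x : Fin m × Fin n).1 = (x₁ : Fin m × Fin n).1 ∧
            ((x₁ : Fin m × Fin n).2 : ℕ) = n - 2 := by
          rcases hcol with h | ⟨h, h'⟩
          · exact absurd (congrArg Fin.val h).symm (by omega)
          · exact ⟨h, by omega⟩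
        refine ⟨u', hr, Or.inr ⟨hx, by rw [hcase]; exact hrow.2, ?_⟩⟩
        have : ((u' : Fin m × Fin n).1, (⟨n - 1, by omega⟩ : Fin n)) = (x : Fin m × Fin n) := by
          refine Prod.ext ?_ (Fin.ext ?_)
          · rw [hcase, ← hrow.1]
          · simpa using hx.symm
        rw [this]; exact x.2
      · exact ⟨u', hr, Or.inr ⟨hx, hu2, hu1⟩⟩
    · -- x is not in the last column
      rcases hcase with hcase | ⟨hx₁, hu2, hu1⟩
      · -- x₁ not in the last column either: step directly
        have hx₁ : ((x₁ : Fin m × Fin n).2 : ℕ) ≠ n - 1 := by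
          rw [← hcase]; exact u'.2.2
        refine ⟨⟨↑x, ⟨x.2, hx⟩⟩, ?_, Or.inl rfl⟩
        refine SimpleGraph.Reachable.trans ?_ hr
        refine SimpleGraph.Adj.reachable ?_
        show (compG m n).Adj ↑x ↑u'
        rw [hcase, compG_adj]; exact ⟨hne, hcol⟩
      · -- x₁ in the last column; x must be in column n-2, same as u'
        have hxcol : ((x : Fin m × Fin n).2 : ℕ) = n - 2 := by
          rcases hcol with h | ⟨h, h'⟩
          · exact absurd (congrArg Fin.val h) (by omega)
          · omega
        refine ⟨⟨↑x, ⟨x.2, hx⟩⟩, ?_, Or.inl rfl⟩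
        refine SimpleGraph.Reachable.trans (same_col_reach _ u' (Fin.ext ?_)) hr
        rw [hxcol, hu2]
/-! ### Restriction and extension preserve goodness -/

lemma good_res {m n : ℕ} (hn : 2 ≤ n) {S : Finset (Fin m)} {C : Finset (Fin m × Fin n)}
    (hC : Good m n S C) :
    Good m (n - 1) (traceC m n hn C) (resC m n C) ∧ ((traceC m n hn C) ∩ S).Nonempty := by
  obtain ⟨⟨hne, hconn⟩, hcols, hlast⟩ := hC
  set s'' : Set (Fin m × Fin n) := {p : Fin m × Fin n | p ∈ C ∧ ((p.2 : ℕ)) ≠ n - 1} with hs''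
  have himg : emb m n '' ↑(resC m n C) = s'' := by
    ext v
    constructor
    · rintro ⟨p, hp, rfl⟩
      rw [Finset.mem_coe, mem_resC] at hp
      refine ⟨hp, ?_⟩
      have : (p.2 : ℕ) < n - 1 := p.2.isLt
      simp only [emb, Fin.coe_castLE]
      omega
    · rintro ⟨hv, hv2⟩
      have hlt : ((v.2 : ℕ)) < n - 1 := by have := v.2.isLt; omega
      refine ⟨(v.1, ⟨(v.2 : ℕ), hlt⟩), ?_, Prod.ext rfl (Fin.ext rfl)⟩
      rw [Finset.mem_coe, mem_resC]
      have : emb m n (v.1, ⟨(v.2 : ℕ), hlt⟩) = v := Prod.ext rfl (Fin.ext rfl)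
      rw [this]; exact hv
  have hs''conn : ((compG m n).induce s'').Connected := by
    rw [SimpleGraph.connected_iff_exists_forall_reachable]
    obtain ⟨b, hb⟩ := hcols ⟨0, by omega⟩
    have hbne : (0 : ℕ) ≠ n - 1 := by omega
    have hb0 : ((b, (⟨0, by omega⟩ : Fin n)) : Fin m × Fin n) ∈ s'' := ⟨hb, hbne⟩
    refine ⟨⟨_, hb0⟩, fun w => ?_⟩
    obtain ⟨W⟩ := hconn.preconnected ⟨↑w, w.2.1⟩ ⟨_, hb⟩
    obtain ⟨u', hr, hcase⟩ := walk_reroute hn C ⟨↑w, w.2.1⟩ ⟨_, hb⟩ W hbne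
    rcases hcase with hcase | ⟨hx, _, _⟩
    · have hu'w : u' = w := Subtype.ext hcase
      rw [hu'w] at hr
      exact hr.symm
    · exact absurd hx w.2.2
  refine ⟨⟨⟨?_, ?_⟩, ?_, ?_⟩, ?_⟩
  · -- resC nonempty
    obtain ⟨b, hb⟩ := hcols ⟨0, by omega⟩
    refine ⟨(b, ⟨0, by omega⟩), ?_⟩
    rw [Finset.mem_coe, mem_resC]
    have : emb m n (b, ⟨0, by omega⟩) = (b, (⟨0, by omega⟩ : Fin n)) :=
      Prod.ext rfl (Fin.ext rfl)
    rw [this]; exact hb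
  · -- resC connected
    rw [connected_congr (emb m n) (emb_injective m n) emb_adj, himg]
    exact hs''conn
  · -- all columns met
    intro j
    obtain ⟨b, hb⟩ := hcols (Fin.castLE (Nat.sub_le n 1) j)
    exact ⟨b, mem_resC.mpr hb⟩
  · -- last column of resC is traceC
    intro a j hj
    rw [mem_resC, mem_traceC]
    have : emb m n (a, j) = (a, (⟨n - 2, by omega⟩ : Fin n)) := by
      refine Prod.ext rfl (Fin.ext ?_)
      simp only [emb, Fin.coe_castLE]
      omega
    rw [this]
  · -- trace meets S
    obtain ⟨b, hb⟩ := hcols ⟨0, by omega⟩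
    obtain ⟨c, hc⟩ := hcols ⟨n - 1, by omega⟩
    obtain ⟨W⟩ := hconn.preconnected ⟨_, hc⟩ ⟨_, hb⟩
    obtain ⟨u', hr, hcase⟩ := walk_reroute hn C ⟨_, hc⟩ ⟨_, hb⟩ W (by
      show (((⟨0, by omega⟩ : Fin n) : ℕ)) ≠ n - 1
      simp; omega)
    rcases hcase with hcase | ⟨_, hu2, hu1⟩
    · exact absurd (by rw [hcase]) u'.2.2
    · refine ⟨(u' : Fin m × Fin n).1, Finset.mem_inter.mpr ⟨?_, ?_⟩⟩
      · rw [mem_traceC]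
        have : ((u' : Fin m × Fin n).1, (⟨n - 2, by omega⟩ : Fin n)) = (u' : Fin m × Fin n) :=
          Prod.ext rfl (Fin.ext (by simpa using hu2.symm))
        rw [this]; exact u'.2.1
      · exact (hlast _ _ rfl).mp hu1
lemma good_ext {m n : ℕ} (hn : 2 ≤ n) {S T : Finset (Fin m)}
    {C' : Finset (Fin m × Fin (n - 1))} (hC' : Good m (n - 1) T C')
    (hTS : (T ∩ S).Nonempty) : Good m n S (extC m n hn S C') := by
  obtain ⟨⟨hne', hconn'⟩, hcols', hlast'⟩ := hC'
  obtain ⟨a, haTS⟩ := hTS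
  rw [Finset.mem_inter] at haTS
  obtain ⟨haT, haS⟩ := haTS
  have hlast'' : ((⟨n - 2, by omega⟩ : Fin (n - 1)) : ℕ) = (n - 1) - 1 := by simp; omega
  have haC' : (a, (⟨n - 2, by omega⟩ : Fin (n - 1))) ∈ C' := (hlast' a _ hlast'').mpr haT
  have hv₀ : ((a, (⟨n - 1, by omega⟩ : Fin n)) : Fin m × Fin n) ∈ extC m n hn S C' :=
    mem_extC.mpr (Or.inr ⟨haS, rfl⟩)
  have hembmem : ∀ p ∈ (C' : Set (Fin m × Fin (n - 1))),
      emb m n p ∈ ((extC m n hn S C' : Finset (Fin m × Fin n)) : Set (Fin m × Fin n)) := by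
    intro p hp
    rw [Finset.mem_coe] at hp ⊢
    exact mem_extC.mpr (Or.inl ⟨p, hp, rfl⟩)
  refine ⟨⟨⟨_, hv₀⟩, ?_⟩, ?_, ?_⟩
  · -- connectivity
    rw [SimpleGraph.connected_iff_exists_forall_reachable]
    refine ⟨⟨_, hv₀⟩, fun w => ?_⟩
    rcases mem_extC.mp w.2 with ⟨p, hp, hpe⟩ | ⟨hw1, hw2⟩
    · -- w comes from C'
      have hreach := hconn'.preconnected ⟨(a, ⟨n - 2, by omega⟩), haC'⟩ ⟨p, hp⟩
      have hmap := SimpleGraph.Reachable.map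
        (inducedHom (emb m n) (fun a b h => (emb_adj a b).mp h) _ _ hembmem) hreach
      refine SimpleGraph.Reachable.trans ?_ (hmap.trans ?_)
      · -- v₀ is adjacent to the embedded (a, n-2)
        refine SimpleGraph.Adj.reachable ?_
        show (compG m n).Adj (a, (⟨n - 1, by omega⟩ : Fin n))
          (emb m n (a, ⟨n - 2, by omega⟩))
        rw [compG_adj]
        constructor
        · intro hh
          have := congrArg (fun q => ((q.2 : Fin n) : ℕ)) hh
          simp only [emb, Fin.coe_castLE] at this
          omega
        · refine Or.inr ⟨rfl, Or.inr ?_⟩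
          simp only [emb, Fin.coe_castLE]
          omega
      · -- endpoints agree
        have h2 : (inducedHom (emb m n) (fun a b h => (emb_adj a b).mp h) _ _ hembmem)
            ⟨p, hp⟩ = w := Subtype.ext hpe
        rw [h2]
    · -- w is in the last column
      exact same_col_reach _ _ (Fin.ext (by simpa using hw2.symm))
  · -- all columns met
    intro j
    by_cases hj : (j : ℕ) = n - 1
    · refine ⟨a, mem_extC.mpr (Or.inr ⟨haS, hj⟩)⟩
    · have hjlt : (j : ℕ) < n - 1 := by have := j.isLt; omega
      obtain ⟨b, hb⟩ := hcols' ⟨(j : ℕ), hjlt⟩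
      refine ⟨b, mem_extC.mpr (Or.inl ⟨(b, ⟨(j : ℕ), hjlt⟩), hb, Prod.ext rfl (Fin.ext rfl)⟩)⟩
  · -- last column is S
    intro i j hj
    rw [mem_extC]
    constructor
    · rintro (⟨p, hp, hpe⟩ | ⟨h1, _⟩)
      · exfalso
        have := congrArg (fun q => ((q.2 : Fin n) : ℕ)) hpe
        simp only [emb, Fin.coe_castLE] at this
        have := p.2.isLt
        omega
      · exact h1
    · intro hi
      exact Or.inr ⟨hi, hj⟩
lemma res_ext {m n : ℕ} (hn : 2 ≤ n) (S : Finset (Fin m))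
    (C' : Finset (Fin m × Fin (n - 1))) : resC m n (extC m n hn S C') = C' := by
  ext p
  rw [mem_resC, mem_extC]
  constructor
  · rintro (⟨q, hq, hqe⟩ | ⟨_, h2⟩)
    · rwa [← emb_injective m n hqe]
    · exfalso
      have : ((emb m n p).2 : ℕ) = (p.2 : ℕ) := by simp [emb]
      have := p.2.isLt
      omega
  · intro hp
    exact Or.inl ⟨p, hp, rfl⟩

lemma trace_ext {m n : ℕ} (hn : 2 ≤ n) {S T : Finset (Fin m)}
    {C' : Finset (Fin m × Fin (n - 1))} (hC' : Good m (n - 1) T C') :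
    traceC m n hn (extC m n hn S C') = T := by
  obtain ⟨-, -, hlast'⟩ := hC'
  ext a
  rw [mem_traceC, mem_extC]
  constructor
  · rintro (⟨q, hq, hqe⟩ | ⟨_, h2⟩)
    · have h1 : q.1 = a := congrArg Prod.fst hqe
      have h2 : (q.2 : ℕ) = n - 2 := by
        have := congrArg (fun v => ((v.2 : Fin n) : ℕ)) hqe
        simpa [emb] using this
      have hq2 : q = (a, (⟨n - 2, by omega⟩ : Fin (n - 1))) :=
        Prod.ext h1 (Fin.ext (by simpa using h2))
      rw [hq2] at hq
      exact (hlast' a _ (by simp; omega)).mp hq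
    · exfalso; simp at h2; omega
  · intro ha
    refine Or.inl ⟨(a, (⟨n - 2, by omega⟩ : Fin (n - 1))), (hlast' a _ (by simp; omega)).mpr ha,
      Prod.ext rfl (Fin.ext (by simp [emb]))⟩

lemma ext_res {m n : ℕ} (hn : 2 ≤ n) {S : Finset (Fin m)} {C : Finset (Fin m × Fin n)}
    (hC : Good m n S C) : extC m n hn S (resC m n C) = C := by
  obtain ⟨-, -, hlast⟩ := hC
  ext v
  rw [mem_extC]
  constructor
  · rintro (⟨q, hq, hqe⟩ | ⟨h1, h2⟩)
    · rw [mem_resC] at hq; rwa [hqe] at hq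
    · have hv : v = (v.1, v.2) := rfl
      rw [hv]
      exact (hlast v.1 v.2 h2).mpr h1
  · intro hv
    by_cases h2 : (v.2 : ℕ) = n - 1
    · refine Or.inr ⟨?_, h2⟩
      have hv' : v = (v.1, v.2) := rfl
      rw [hv'] at hv
      exact (hlast v.1 v.2 h2).mp hv
    · have hlt : (v.2 : ℕ) < n - 1 := by have := v.2.isLt; omega
      refine Or.inl ⟨(v.1, ⟨(v.2 : ℕ), hlt⟩), ?_, Prod.ext rfl (Fin.ext rfl)⟩
      rw [mem_resC]
      have : emb m n (v.1, ⟨(v.2 : ℕ), hlt⟩) = v := Prod.ext rfl (Fin.ext rfl)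
      rw [this]; exact hv

lemma fiber_card_eq {m n : ℕ} (hn : 2 ≤ n) (S T : Finset (Fin m)) (hTS : (T ∩ S).Nonempty) :
    Nat.card {C : Finset (Fin m × Fin n) // Good m n S C ∧ traceC m n hn C = T} =
      Nat.card {C' : Finset (Fin m × Fin (n - 1)) // Good m (n - 1) T C'} := by
  refine Nat.card_congr ⟨?_, ?_, ?_, ?_⟩
  · rintro ⟨C, hG, hT⟩
    exact ⟨resC m n C, hT ▸ (good_res hn hG).1⟩
  · rintro ⟨C', h⟩
    exact ⟨extC m n hn S C', good_ext hn h hTS, trace_ext hn h⟩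
  · rintro ⟨C, hG, hT⟩
    exact Subtype.ext (ext_res hn hG)
  · rintro ⟨C', h⟩
    exact Subtype.ext (res_ext hn S C')
/-! ### Counting tools -/

lemma natCard_fiberwise {α β : Type*} [Fintype α] [DecidableEq β] (P : α → Prop)
    (f : α → β) (B : Finset β) (h : ∀ a, P a → f a ∈ B) :
    Nat.card {a // P a} = ∑ b ∈ B, Nat.card {a // P a ∧ f a = b} := by
  classical
  simp only [Nat.card_eq_fintype_card, Fintype.card_subtype]
  rw [Finset.card_eq_sum_card_fiberwise (t := B) (f := f)
    (fun x hx => h x (Finset.mem_filter.mp hx).2)]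
  refine Finset.sum_congr rfl fun b _ => ?_
  congr 1
  ext a
  simp [Finset.mem_filter, and_assoc]

lemma canon_card {m j : ℕ} (hj : j ≤ m) : (canon m j).card = j := by
  have h : ∀ x ∈ Finset.range j, x < m := fun x hx => lt_of_lt_of_le (Finset.mem_range.mp hx) hj
  have : canon m j = (Finset.range j).attachFin h := by
    ext a
    simp [canon, Finset.mem_attachFin]
  rw [this, Finset.card_attachFin, Finset.card_range]

/-! ### Permutation symmetry -/

lemma perm_adj {m n : ℕ} (σ : Equiv.Perm (Fin m)) (p q : Fin m × Fin n) :
    (compG m n).Adj p q ↔ (compG m n).Adj (σ p.1, p.2) (σ q.1, q.2) := by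
  simp only [compG_adj, ne_eq, Prod.ext_iff, Prod.mk.injEq, EmbeddingLike.apply_eq_iff_eq]

lemma perm_inj {m n : ℕ} (σ : Equiv.Perm (Fin m)) :
    Function.Injective (fun p : Fin m × Fin n => (σ p.1, p.2)) := by
  rintro ⟨a, j⟩ ⟨b, k⟩ h
  simp only [Prod.mk.injEq, EmbeddingLike.apply_eq_iff_eq] at h
  exact Prod.ext h.1 h.2

lemma good_map {m n : ℕ} (σ : Equiv.Perm (Fin m)) {S : Finset (Fin m)}
    {C : Finset (Fin m × Fin n)} (hC : Good m n S C) :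
    Good m n (S.image σ) (C.image (fun p => (σ p.1, p.2))) := by
  obtain ⟨⟨hne, hconn⟩, hcols, hlast⟩ := hC
  refine ⟨⟨?_, ?_⟩, ?_, ?_⟩
  · rw [Finset.coe_image]
    exact hne.image _
  · rw [Finset.coe_image, ← connected_congr _ (perm_inj σ) (perm_adj σ)]
    exact hconn
  · intro j
    obtain ⟨b, hb⟩ := hcols j
    exact ⟨σ b, Finset.mem_image.mpr ⟨(b, j), hb, rfl⟩⟩
  · intro a j hj
    rw [Finset.mem_image]
    constructor
    · rintro ⟨⟨a', j'⟩, hp, hpe⟩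
      simp only [Prod.mk.injEq] at hpe
      obtain ⟨h1, h2⟩ := hpe
      subst h2
      rw [Finset.mem_image]
      exact ⟨a', (hlast a' j' hj).mp hp, h1⟩
    · intro ha
      obtain ⟨b, hb, hbe⟩ := Finset.mem_image.mp ha
      exact ⟨(b, j), (hlast b j hj).mpr hb, by rw [hbe]⟩

lemma Fcnt_image (m n : ℕ) (σ : Equiv.Perm (Fin m)) (S : Finset (Fin m)) :
    Fcnt m n (S.image σ) = Fcnt m n S := by
  rw [Fcnt_eq_card, Fcnt_eq_card]
  refine (Nat.card_congr ⟨?_, ?_, ?_, ?_⟩).symm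
  · rintro ⟨C, hC⟩
    exact ⟨C.image (fun p => (σ p.1, p.2)), good_map σ hC⟩
  · rintro ⟨C, hC⟩
    have := good_map σ.symm hC
    rw [Finset.image_image] at this
    have him : S.image (⇑σ.symm ∘ ⇑σ) = S := by simp
    rw [him] at this
    exact ⟨C.image (fun p => (σ.symm p.1, p.2)), this⟩
  · rintro ⟨C, hC⟩
    refine Subtype.ext ?_
    simp only [Finset.image_image]
    ext ⟨a, j⟩
    simp
  · rintro ⟨C, hC⟩
    refine Subtype.ext ?_
    simp only [Finset.image_image]
    ext ⟨a, j⟩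
    simp
lemma Fcnt_card_congr (m n : ℕ) (S T : Finset (Fin m)) (h : S.card = T.card) :
    Fcnt m n S = Fcnt m n T := by
  classical
  have e : {x // x ∈ S} ≃ {x // x ∈ T} := Finset.equivOfCardEq h
  set σ : Equiv.Perm (Fin m) := e.extendSubtype with hσ
  have himg : S.image σ = T := by
    apply Finset.eq_of_subset_of_card_le
    · intro x hx
      obtain ⟨a, ha, rfl⟩ := Finset.mem_image.mp hx
      exact e.extendSubtype_mem a ha
    · rw [Finset.card_image_of_injective _ σ.injective, h]
  rw [← himg, Fcnt_image]
lemma Fcnt_one {m : ℕ} (S' : Finset (Fin m)) (hS' : S'.Nonempty) : Fcnt m 1 S' = 1 := by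
  rw [Fcnt_eq_card, Nat.card_eq_one_iff_unique]
  obtain ⟨a₀, ha₀⟩ := hS'
  constructor
  · constructor
    rintro ⟨C, hC⟩ ⟨D, hD⟩
    refine Subtype.ext ?_
    ext ⟨a, j⟩
    have hj : (j : ℕ) = 1 - 1 := by have := j.isLt; omega
    rw [hC.2.2 a j hj, hD.2.2 a j hj]
  · refine ⟨⟨S'.image (fun a => (a, (0 : Fin 1))), ⟨?_, ?_⟩, ?_, ?_⟩⟩
    · exact ⟨(a₀, 0), by rw [Finset.mem_coe]; exact Finset.mem_image.mpr ⟨a₀, ha₀, rfl⟩⟩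
    · refine induce_connected_of_clique
        ⟨(a₀, 0), by rw [Finset.mem_coe]; exact Finset.mem_image.mpr ⟨a₀, ha₀, rfl⟩⟩ ?_
      intro u _ v _ huv
      rw [compG_adj]
      exact ⟨huv, Or.inl (Subsingleton.elim u.2 v.2)⟩
    · intro j
      refine ⟨a₀, ?_⟩
      have : j = (0 : Fin 1) := Subsingleton.elim _ _
      rw [this]
      exact Finset.mem_image.mpr ⟨a₀, ha₀, rfl⟩
    · intro a j _
      have hj0 : j = (0 : Fin 1) := Subsingleton.elim _ _
      subst hj0
      rw [Finset.mem_image]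
      constructor
      · rintro ⟨b, hb, hbe⟩
        have : b = a := congrArg Prod.fst hbe
        rwa [this] at hb
      · intro ha
        exact ⟨a, ha, rfl⟩

lemma Fcnt_rec {m n i : ℕ} (hn : 2 ≤ n) (him : i ≤ m)
    (S : Finset (Fin m)) (hS : S.card = i) :
    Fcnt m n S = ∑ j ∈ Finset.Icc 1 m,
      (Nat.choose m j - Nat.choose (m - i) j) * Fcnt m (n - 1) (canon m j) := by
  classical
  set A : Finset (Finset (Fin m)) :=
    Finset.univ.filter (fun T => (T ∩ S).Nonempty) with hA
  have step1 : Fcnt m n S = ∑ T ∈ A, Fcnt m (n - 1) T := by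
    rw [Fcnt_eq_card,
      natCard_fiberwise (Good m n S) (traceC m n hn) A
        (fun C hC => Finset.mem_filter.mpr ⟨Finset.mem_univ _, (good_res hn hC).2⟩)]
    refine Finset.sum_congr rfl fun T hT => ?_
    rw [fiber_card_eq hn S T (Finset.mem_filter.mp hT).2, Fcnt_eq_card]
  have hmaps : ∀ T ∈ A, T.card ∈ Finset.Icc 1 m := by
    intro T hT
    have hne : T.Nonempty := by
      obtain ⟨a, ha⟩ := (Finset.mem_filter.mp hT).2
      exact ⟨a, (Finset.mem_inter.mp ha).1⟩
    rw [Finset.mem_Icc]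
    refine ⟨Finset.card_pos.mpr hne, ?_⟩
    have := Finset.card_le_univ T
    simpa using this
  rw [step1, ← Finset.sum_fiberwise_of_maps_to hmaps (Fcnt m (n - 1))]
  refine Finset.sum_congr rfl fun j hj => ?_
  obtain ⟨hj1, hjm⟩ := Finset.mem_Icc.mp hj
  have hcanon : (canon m j).card = j := canon_card hjm
  have hconst : ∀ T ∈ A.filter (fun T => T.card = j),
      Fcnt m (n - 1) T = Fcnt m (n - 1) (canon m j) := by
    intro T hT
    exact Fcnt_card_congr m (n - 1) T (canon m j)
      (by rw [hcanon, (Finset.mem_filter.mp hT).2])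
  rw [Finset.sum_congr rfl hconst, Finset.sum_const, smul_eq_mul]
  congr 1
  -- count the fiber
  set X : Finset (Finset (Fin m)) := Finset.univ.filter (fun T => T.card = j) with hX
  have hXA : A.filter (fun T => T.card = j) = X.filter (fun T => (T ∩ S).Nonempty) := by
    ext T
    simp only [hA, hX, Finset.mem_filter, Finset.mem_univ, true_and]
    tauto
  have hXcard : X.card = Nat.choose m j := by
    have : X = Finset.powersetCard j Finset.univ := by
      ext T
      simp [hX, Finset.mem_powersetCard_univ]
    rw [this, Finset.card_powersetCard]
    congr 1
    simp
  have hcompl : (X.filter (fun T => ¬(T ∩ S).Nonempty)).card = Nat.choose (m - i) j := by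
    have : X.filter (fun T => ¬(T ∩ S).Nonempty) = Finset.powersetCard j Sᶜ := by
      ext T
      simp only [hX, Finset.mem_filter, Finset.mem_univ, true_and,
        Finset.mem_powersetCard, Finset.not_nonempty_iff_eq_empty]
      constructor
      · rintro ⟨hc, he⟩
        refine ⟨?_, hc⟩
        intro x hx
        rw [Finset.mem_compl]
        intro hxS
        have : x ∈ T ∩ S := Finset.mem_inter.mpr ⟨hx, hxS⟩
        rw [he] at this
        exact absurd this (Finset.notMem_empty x)
      · rintro ⟨hsub, hc⟩
        refine ⟨hc, ?_⟩
        rw [Finset.eq_empty_iff_forall_notMem]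
        intro x hx
        obtain ⟨h1, h2⟩ := Finset.mem_inter.mp hx
        exact absurd h2 (Finset.mem_compl.mp (hsub h1))
    rw [this, Finset.card_powersetCard, Finset.card_compl, hS]
    congr 1
    simp
  have hadd := Finset.card_filter_add_card_filter_not
    (s := X) (p := fun T => (T ∩ S).Nonempty)
  rw [hXA]
  omega

theorem f_recurrence (m n i : ℕ) (hm : 0 < m) (hn : 2 ≤ n) (hi1 : 1 ≤ i) (him : i ≤ m)
    (S : Finset (Fin m)) (hS : S.card = i) :
    (Fcnt m n S =
      (∑ j ∈ Finset.Icc 1 (m - i),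
          (Nat.choose m j - Nat.choose (m - i) j) * Fcnt m (n - 1) (canon m j)) +
        ∑ j ∈ Finset.Icc (m - i + 1) m, Nat.choose m j * Fcnt m (n - 1) (canon m j)) ∧
    (∀ i' : ℕ, 1 ≤ i' → i' ≤ m → ∀ S' : Finset (Fin m), S'.card = i' → Fcnt m 1 S' = 1) := by
  constructor
  · rw [Fcnt_rec hn him S hS]
    have hsplit : Finset.Icc 1 m = Finset.Icc 1 (m - i) ∪ Finset.Icc (m - i + 1) m := by
      ext x
      simp only [Finset.mem_Icc, Finset.mem_union]
      omega
    have hdisj : Disjoint (Finset.Icc 1 (m - i)) (Finset.Icc (m - i + 1) m) := by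
      rw [Finset.disjoint_left]
      intro x hx hx'
      simp only [Finset.mem_Icc] at hx hx'
      omega
    rw [hsplit, Finset.sum_union hdisj]
    congr 1
    refine Finset.sum_congr rfl fun j hj => ?_
    obtain ⟨hj1, hj2⟩ := Finset.mem_Icc.mp hj
    rw [show Nat.choose (m - i) j = 0 from Nat.choose_eq_zero_of_lt (by omega), Nat.sub_zero]
  · intro i' h1 _ S' hS'
    exact Fcnt_one S' (Finset.card_pos.mp (by omega))
end

section
/- For n ≥ 2 and any subset S of the n-th column of K_m × P_n with |S| = i, the number of connected sets containing at least one vertex of every column and meeting the n-th column exactly in S is independent of the choice of S with |S| = i. -/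
open SimpleGraph Matrix

/-- Permuting the first coordinate is an automorphism of `compG`. -/
def compIso (m n : ℕ) (σ : Equiv.Perm (Fin m)) : compG m n ≃g compG m n where
  toEquiv := Equiv.prodCongr σ (Equiv.refl (Fin n))
  map_rel_iff' := by
    intro v w
    simp only [compG, fromRel_adj, Equiv.prodCongr_apply, Prod.map, Equiv.refl_apply, ne_eq,
      EmbeddingLike.apply_eq_iff_eq, Prod.ext_iff]

/-- An automorphism maps induced subgraphs isomorphically. -/
def induceIso {V : Type*} {G : SimpleGraph V} (φ : G ≃g G) (s : Set V) :
    G.induce s ≃g G.induce (φ '' s) where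
  toEquiv := Equiv.image φ.toEquiv s
  map_rel_iff' := by
    intro a b
    simp only [Equiv.image, Equiv.coe_fn_mk, comap_adj, Function.Embedding.coe_subtype]
    exact φ.map_rel_iff

lemma pred_map (m n : ℕ) (S T : Finset (Fin m)) (σ : Equiv.Perm (Fin m))
    (hσ : ∀ i, i ∈ S ↔ σ i ∈ T) (C : Finset (Fin m × Fin n))
    (hC : IsConnSet (compG m n) C ∧ (∀ j : Fin n, ∃ i : Fin m, (i, j) ∈ C) ∧
      ∀ (i : Fin m) (j : Fin n), (j : ℕ) = n - 1 → ((i, j) ∈ C ↔ i ∈ S)) :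
    IsConnSet (compG m n) ((compIso m n σ).toEquiv.finsetCongr C) ∧
      (∀ j : Fin n, ∃ i : Fin m, (i, j) ∈ (compIso m n σ).toEquiv.finsetCongr C) ∧
      ∀ (i : Fin m) (j : Fin n), (j : ℕ) = n - 1 →
        ((i, j) ∈ (compIso m n σ).toEquiv.finsetCongr C ↔ i ∈ T) := by
  obtain ⟨⟨hne, hconn⟩, hall, hlast⟩ := hC
  have hmem : ∀ v : Fin m × Fin n,
      v ∈ (compIso m n σ).toEquiv.finsetCongr C ↔ (σ⁻¹ v.1, v.2) ∈ C := by
    intro v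
    rw [Equiv.finsetCongr_apply, Finset.mem_map_equiv]
    rfl
  refine ⟨⟨?_, ?_⟩, ?_, ?_⟩
  · obtain ⟨v, hv⟩ := hne
    refine ⟨(compIso m n σ).toEquiv v, ?_⟩
    rw [Finset.mem_coe, hmem]
    simpa [compIso] using hv
  · have hcoe : ((((compIso m n σ).toEquiv.finsetCongr C) : Finset (Fin m × Fin n)) :
        Set (Fin m × Fin n)) = (compIso m n σ).toEquiv '' (C : Set (Fin m × Fin n)) := by
      rw [Equiv.finsetCongr_apply, Finset.coe_map]
      rfl
    rw [hcoe]
    exact ((induceIso (compIso m n σ) (C : Set (Fin m × Fin n))).connected_iff).mp hconn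
  · intro j
    obtain ⟨i, hi⟩ := hall j
    exact ⟨σ i, by rw [hmem]; simpa using hi⟩
  · intro i j hj
    rw [hmem]
    have := hlast (σ⁻¹ i) j hj
    rw [hσ (σ⁻¹ i)] at this
    simpa using this

lemma Fcnt_perm (m n : ℕ) (S T : Finset (Fin m)) (σ : Equiv.Perm (Fin m))
    (hσ : ∀ i, i ∈ S ↔ σ i ∈ T) : Fcnt m n S = Fcnt m n T := by
  have hσ' : ∀ i, i ∈ T ↔ σ⁻¹ i ∈ S := by
    intro i; rw [hσ (σ⁻¹ i)]; simp
  have hinv : ∀ C : Finset (Fin m × Fin n),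
      (compIso m n σ⁻¹).toEquiv.finsetCongr ((compIso m n σ).toEquiv.finsetCongr C) = C := by
    have hsymm : (compIso m n σ⁻¹).toEquiv = ((compIso m n σ).toEquiv).symm :=
      Equiv.ext fun v => rfl
    intro C
    rw [hsymm, ← Equiv.finsetCongr_symm, Equiv.symm_apply_apply]
  refine Nat.card_congr (((compIso m n σ).toEquiv.finsetCongr).subtypeEquiv fun C => ?_)
  constructor
  · exact pred_map m n S T σ hσ C
  · intro h
    have := pred_map m n T S σ⁻¹ hσ' _ h
    rwa [hinv C] at this

theorem f_depends_only_on_card (m n : ℕ) (hn : 2 ≤ n)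
    (S T : Finset (Fin m)) (h : S.card = T.card) :
    Fcnt m n S = Fcnt m n T := by
  have e : {x // x ∈ S} ≃ {x // x ∈ T} := Finset.equivOfCardEq h
  refine Fcnt_perm m n S T (e.extendSubtype) fun i => ?_
  constructor
  · exact fun hi => e.extendSubtype_mem i hi
  · intro hi
    by_contra hiS
    exact e.extendSubtype_not_mem i hiS hi
end

section
/- Let v_k denote the column vector (f_{m,k}^1, ..., f_{m,k}^m)^T of counts of connected sets of K_m × P_k containing at least one vertex per column with prescribed intersection of size i with the k-th column. Then v_k = T^{k-1} · 1, where 1 is the all-ones vector and T is the m × m matrix with entries t_{ij} = C(m,j) - C(m-i,j) if j ≤ m - i and t_{ij} = C(m,j) if j ≥ m - i + 1. -/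
open SimpleGraph Matrix

/-- The transfer matrix T (with 0-based indices corresponding to 1-based i,j). -/
def Tmat (m : ℕ) : Matrix (Fin m) (Fin m) ℕ :=
  fun i j =>
    if (j : ℕ) + 1 ≤ m - ((i : ℕ) + 1) then
      Nat.choose m ((j : ℕ) + 1) - Nat.choose (m - ((i : ℕ) + 1)) ((j : ℕ) + 1)
    else Nat.choose m ((j : ℕ) + 1)

/-! ### Auxiliary material -/

/-- Reachability within a vertex set. -/
def RIn {V : Type} (G : SimpleGraph V) (C : Set V) : V → V → Prop :=
  Relation.ReflTransGen (fun x y => x ∈ C ∧ y ∈ C ∧ G.Adj x y)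

lemma RIn.single {V : Type} {G : SimpleGraph V} {C : Set V} {x y : V}
    (hx : x ∈ C) (hy : y ∈ C) (h : G.Adj x y) : RIn G C x y :=
  Relation.ReflTransGen.single ⟨hx, hy, h⟩

lemma walk_to_RIn {V : Type} {G : SimpleGraph V} {s : Set V} :
    ∀ {a b : s}, (G.induce s).Walk a b → RIn G s (a : V) (b : V)
  | _, _, SimpleGraph.Walk.nil => Relation.ReflTransGen.refl
  | a, b, SimpleGraph.Walk.cons (v := c) h p =>
      Relation.ReflTransGen.head ⟨a.2, c.2, h⟩ (walk_to_RIn p)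

lemma RIn_to_reachable {V : Type} {G : SimpleGraph V} {s : Set V} {u v : V}
    (h : RIn G s u v) (hu : u ∈ s) : ∀ hv : v ∈ s, (G.induce s).Reachable ⟨u, hu⟩ ⟨v, hv⟩ := by
  induction h with
  | refl => exact fun hv => SimpleGraph.Reachable.refl _
  | @tail b c hab step ih =>
    exact fun hv => SimpleGraph.Reachable.trans (ih step.1)
      (SimpleGraph.Adj.reachable (u := (⟨b, step.1⟩ : s)) (v := ⟨c, hv⟩) step.2.2)

lemma isConnSet_iff {V : Type} (G : SimpleGraph V) (C : Finset V) :
    IsConnSet G C ↔ (C : Set V).Nonempty ∧ ∀ u ∈ C, ∀ v ∈ C, RIn G (C : Set V) u v := by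
  constructor
  · rintro ⟨hne, hconn⟩
    refine ⟨hne, fun u hu v hv => ?_⟩
    obtain ⟨w⟩ := hconn.preconnected ⟨u, hu⟩ ⟨v, hv⟩
    exact walk_to_RIn w
  · rintro ⟨hne, h⟩
    obtain ⟨x, hx⟩ := hne
    haveI : Nonempty (C : Set _) := ⟨⟨x, hx⟩⟩
    refine ⟨⟨x, hx⟩, ⟨?_⟩⟩
    rintro ⟨u, hu⟩ ⟨v, hv⟩
    exact RIn_to_reachable (h u hu v hv) hu hv

lemma compG_adj_s9 {m n : ℕ} (x y : Fin m × Fin n) :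
    (compG m n).Adj x y ↔ x ≠ y ∧
      (x.2 = y.2 ∨ (x.1 = y.1 ∧ ((x.2 : ℕ) + 1 = y.2 ∨ (y.2 : ℕ) + 1 = x.2))) := by
  rw [compG, SimpleGraph.fromRel_adj]
  constructor
  · rintro ⟨hne, h⟩
    refine ⟨hne, ?_⟩
    rcases h with (⟨h1, h2⟩ | ⟨h1, h2⟩) | (⟨h1, h2⟩ | ⟨h1, h2⟩)
    · exact Or.inl h1
    · exact Or.inr ⟨h1, Or.inl h2⟩
    · exact Or.inl h1.symm
    · exact Or.inr ⟨h1.symm, Or.inr h2⟩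
  · rintro ⟨hne, h⟩
    refine ⟨hne, ?_⟩
    rcases h with h1 | ⟨h1, h2 | h2⟩
    · refine Or.inl (Or.inl ⟨h1, fun hc => hne ?_⟩)
      exact Prod.ext hc h1
    · exact Or.inl (Or.inr ⟨h1, h2⟩)
    · exact Or.inr (Or.inr ⟨h1.symm, h2⟩)
lemma card_meets {m : ℕ} (S : Finset (Fin m)) (j : ℕ) :
    ((Finset.univ : Finset (Finset (Fin m))).filter
        (fun S' => S'.card = j ∧ (S' ∩ S).Nonempty)).card
      = Nat.choose m j - Nat.choose (m - S.card) j := by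
  classical
  have h1 : (Finset.univ : Finset (Finset (Fin m))).filter
        (fun S' => S'.card = j ∧ (S' ∩ S).Nonempty)
      = Finset.powersetCard j Finset.univ \ Finset.powersetCard j Sᶜ := by
    have h2 : ∀ S' : Finset (Fin m), S' ⊆ Sᶜ ↔ S' ∩ S = ∅ := fun S' => by
      rw [← Finset.disjoint_iff_inter_eq_empty, ← le_compl_iff_disjoint_right]
    ext S'
    simp only [Finset.mem_filter, Finset.mem_univ, true_and, Finset.mem_sdiff,
      Finset.mem_powersetCard, Finset.subset_univ, h2,
      Finset.nonempty_iff_ne_empty]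
    tauto
  rw [h1, Finset.card_sdiff_of_subset (by
    intro S' hS'
    simp only [Finset.mem_powersetCard] at hS' ⊢
    exact ⟨Finset.subset_univ _, hS'.2⟩)]
  rw [Finset.card_powersetCard, Finset.card_powersetCard, Finset.card_univ,
    Finset.card_compl, Fintype.card_fin]

lemma Fcnt_one_s9 {m : ℕ} (S : Finset (Fin m)) (hS : S.Nonempty) : Fcnt m 1 S = 1 := by
  classical
  obtain ⟨s0, hs0⟩ := hS
  rw [Fcnt, Nat.card_eq_one_iff_unique]
  have hmem : ∀ (C : Finset (Fin m × Fin 1)),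
      (∀ (i : Fin m) (j : Fin 1), (j : ℕ) = 1 - 1 → ((i, j) ∈ C ↔ i ∈ S)) →
      ∀ p : Fin m × Fin 1, p ∈ C ↔ p.1 ∈ S := by
    intro C h p
    have h0 : p.2 = 0 := Subsingleton.elim _ _
    have := h p.1 p.2 (by rw [h0]; rfl)
    rwa [← h0] at *
  constructor
  · constructor
    rintro ⟨C, hC⟩ ⟨C', hC'⟩
    refine Subtype.ext (Finset.ext fun p => ?_)
    rw [hmem C hC.2.2 p, hmem C' hC'.2.2 p]
  · refine ⟨⟨S.image (fun a => (a, (0 : Fin 1))), ?_, ?_, ?_⟩⟩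
    · rw [isConnSet_iff]
      constructor
      · refine ⟨(s0, 0), ?_⟩
        rw [Finset.mem_coe, Finset.mem_image]
        exact ⟨s0, hs0, rfl⟩
      · intro u hu v hv
        rcases eq_or_ne u v with rfl | hne
        · exact Relation.ReflTransGen.refl
        · refine RIn.single hu hv ?_
          rw [compG_adj_s9]
          exact ⟨hne, Or.inl (Subsingleton.elim _ _)⟩
    · intro j
      refine ⟨s0, ?_⟩
      simp only [Finset.mem_image]
      exact ⟨s0, hs0, by rw [Subsingleton.elim j 0]⟩
    · intro i j hj
      simp only [Finset.mem_image, Prod.mk.injEq]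
      constructor
      · rintro ⟨a, ha, rfl, rfl⟩; exact ha
      · intro hi; exact ⟨i, hi, rfl, Subsingleton.elim _ _⟩
lemma proj_RIn {m k : ℕ} (hk : 1 ≤ k) {C : Finset (Fin m × Fin (k+1))}
    {u v : Fin m × Fin (k+1)}
    (h : RIn (compG m (k+1)) ↑C u v) (hu : (u.2 : ℕ) < k) :
    (((v.2 : ℕ)) < k → RIn (compG m (k+1)) {p : Fin m × Fin (k+1) | p ∈ C ∧ (p.2 : ℕ) < k} u v) ∧
    ((v.2 : ℕ) = k → ∃ a : Fin m, (a, (⟨k-1, by omega⟩ : Fin (k+1))) ∈ C ∧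
       (a, Fin.last k) ∈ C ∧
       RIn (compG m (k+1)) {p : Fin m × Fin (k+1) | p ∈ C ∧ (p.2 : ℕ) < k} u
         (a, ⟨k-1, by omega⟩)) := by
  induction h with
  | refl => exact ⟨fun _ => Relation.ReflTransGen.refl, fun hvk => absurd hvk (by omega)⟩
  | @tail w v hw step ih =>
    obtain ⟨hwC, hvC, hadj⟩ := step
    rw [compG_adj_s9] at hadj
    obtain ⟨hne, hcase⟩ := hadj
    by_cases hvk : (v.2 : ℕ) < k
    · refine ⟨fun _ => ?_, fun hvk' => absurd hvk' (by omega)⟩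
      by_cases hwk : (w.2 : ℕ) < k
      · exact Relation.ReflTransGen.tail (ih.1 hwk)
          ⟨⟨hwC, hwk⟩, ⟨hvC, hvk⟩, by rw [compG_adj_s9]; exact ⟨hne, hcase⟩⟩
      · have hwk' : (w.2 : ℕ) = k := by have := w.2.isLt; omega
        obtain ⟨a, haC, haL, hRa⟩ := ih.2 hwk'
        have hv2 : (v.2 : ℕ) = k - 1 ∧ v.1 = w.1 := by
          rcases hcase with h2 | ⟨h1, h2 | h2⟩
          · exact absurd (congrArg Fin.val h2) (by omega)
          · omega
          · exact ⟨by omega, h1.symm⟩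
        have hveq : v = (v.1, (⟨k-1, by omega⟩ : Fin (k+1))) := by
          rw [Prod.ext_iff]
          exact ⟨rfl, Fin.ext hv2.1⟩
        rcases eq_or_ne a v.1 with rfl | hav
        · rw [hveq]; exact hRa
        · rw [hveq]
          refine Relation.ReflTransGen.tail hRa
            ⟨⟨haC, by simp; omega⟩, ⟨by rw [← hveq]; exact hvC, by simp; omega⟩, ?_⟩
          rw [compG_adj_s9]
          exact ⟨by simp [Prod.ext_iff]; intro h; exact absurd h hav, Or.inl rfl⟩
    · have hvk' : (v.2 : ℕ) = k := by have := v.2.isLt; omega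
      refine ⟨fun h' => absurd h' (by omega), fun _ => ?_⟩
      by_cases hwk : (w.2 : ℕ) < k
      · -- entry step: w.2 = k-1, w.1 = v.1
        have hw2 : (w.2 : ℕ) = k - 1 ∧ w.1 = v.1 := by
          rcases hcase with h2 | ⟨h1, h2 | h2⟩
          · exact absurd (congrArg Fin.val h2) (by omega)
          · exact ⟨by omega, h1⟩
          · omega
        refine ⟨v.1, ?_, ?_, ?_⟩
        · have : w = (v.1, (⟨k-1, by omega⟩ : Fin (k+1))) := by
            rw [Prod.ext_iff]
            exact ⟨hw2.2, Fin.ext hw2.1⟩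
          rwa [← this]
        · have : v = (v.1, Fin.last k) := by
            rw [Prod.ext_iff]
            exact ⟨rfl, Fin.ext hvk'⟩
          rwa [← this]
        · have : w = (v.1, (⟨k-1, by omega⟩ : Fin (k+1))) := by
            rw [Prod.ext_iff]
            exact ⟨hw2.2, Fin.ext hw2.1⟩
          rw [← this]
          exact ih.1 hwk
      · exact ih.2 (by have := w.2.isLt; omega)
/-- The embedding of columns 0..k-1 into the (k+1)-column grid. -/
def upmap (m k : ℕ) : Fin m × Fin k → Fin m × Fin (k+1) := fun p => (p.1, p.2.castSucc)

lemma upmap_inj {m k : ℕ} : Function.Injective (upmap m k) := by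
  rintro ⟨a, b⟩ ⟨c, d⟩ h
  rw [upmap, Prod.ext_iff] at h
  exact Prod.ext h.1 (Fin.castSucc_injective _ h.2)

lemma adj_upmap {m k : ℕ} {x y : Fin m × Fin k} :
    (compG m k).Adj x y ↔ (compG m (k+1)).Adj (upmap m k x) (upmap m k y) := by
  rw [compG_adj_s9, compG_adj_s9]
  constructor
  · rintro ⟨hne, h⟩
    refine ⟨fun hc => hne (upmap_inj hc), ?_⟩
    rcases h with h | ⟨h1, h2⟩
    · exact Or.inl (by rw [upmap]; exact congrArg Fin.castSucc h)
    · exact Or.inr ⟨h1, by simpa [upmap] using h2⟩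
  · rintro ⟨hne, h⟩
    refine ⟨fun hc => hne (congrArg _ hc), ?_⟩
    rcases h with h | ⟨h1, h2⟩
    · exact Or.inl (Fin.castSucc_injective _ h)
    · exact Or.inr ⟨h1, by simpa [upmap] using h2⟩

/-- restriction of a set to the first k columns -/
def cres {m k : ℕ} (C : Finset (Fin m × Fin (k+1))) : Finset (Fin m × Fin k) :=
  Finset.univ.filter (fun p => upmap m k p ∈ C)

/-- row set of column k-1 -/
def scol {m k : ℕ} (C : Finset (Fin m × Fin (k+1))) : Finset (Fin m) :=
  Finset.univ.filter (fun a => (a, (⟨k-1, by omega⟩ : Fin (k+1))) ∈ C)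

lemma RIn_down {m k : ℕ} {C : Finset (Fin m × Fin (k+1))} {u v : Fin m × Fin (k+1)}
    (h : RIn (compG m (k+1)) {p : Fin m × Fin (k+1) | p ∈ C ∧ (p.2 : ℕ) < k} u v) :
    ∀ u' v' : Fin m × Fin k, upmap m k u' = u → upmap m k v' = v →
      RIn (compG m k) ↑(cres C) u' v' := by
  induction h with
  | refl =>
    rintro u' v' rfl h2
    rw [upmap_inj h2]
    exact Relation.ReflTransGen.refl
  | @tail w v hw step ih =>
    rintro u' v' hu' rfl
    obtain ⟨⟨hwC, hwk⟩, ⟨hvC, hvk⟩, hadj⟩ := step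
    set w' : Fin m × Fin k := (w.1, ⟨(w.2 : ℕ), hwk⟩) with hw'
    have hww : upmap m k w' = w := by
      rw [upmap, Prod.ext_iff]
      exact ⟨rfl, Fin.ext rfl⟩
    refine Relation.ReflTransGen.tail (ih u' w' hu' hww) ?_
    refine ⟨?_, ?_, ?_⟩
    · rw [Finset.mem_coe, cres, Finset.mem_filter, hww]
      exact ⟨Finset.mem_univ _, hwC⟩
    · rw [Finset.mem_coe, cres, Finset.mem_filter]
      exact ⟨Finset.mem_univ _, hvC⟩
    · rw [adj_upmap, hww]
      exact hadj

lemma RIn_up {m k : ℕ} {C' : Finset (Fin m × Fin k)} {Cb : Finset (Fin m × Fin (k+1))}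
    (hsub : ∀ p ∈ C', upmap m k p ∈ Cb) {u v : Fin m × Fin k}
    (h : RIn (compG m k) ↑C' u v) :
    RIn (compG m (k+1)) ↑Cb (upmap m k u) (upmap m k v) := by
  induction h with
  | refl => exact Relation.ReflTransGen.refl
  | @tail w v hw step ih =>
    exact Relation.ReflTransGen.tail ih
      ⟨hsub _ step.1, hsub _ step.2.1, adj_upmap.mp step.2.2⟩

lemma RIn_symm {V : Type} {G : SimpleGraph V} {C : Set V} {u v : V}
    (h : RIn G C u v) : RIn G C v u := by
  induction h with
  | refl => exact Relation.ReflTransGen.refl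
  | @tail w v hw step ih =>
    exact Relation.ReflTransGen.head ⟨step.2.1, step.1, step.2.2.symm⟩ ih
/-- The defining property of the sets counted by `Fcnt`. -/
def Pprop (m n : ℕ) (S : Finset (Fin m)) (C : Finset (Fin m × Fin n)) : Prop :=
  IsConnSet (compG m n) C ∧ (∀ j : Fin n, ∃ i : Fin m, (i, j) ∈ C) ∧
      ∀ (i : Fin m) (j : Fin n), (j : ℕ) = n - 1 → ((i, j) ∈ C ↔ i ∈ S)

lemma Fcnt_eq (m n : ℕ) (S : Finset (Fin m)) :
    Fcnt m n S = Nat.card {C : Finset (Fin m × Fin n) // Pprop m n S C} := rfl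

lemma memb_up {m k : ℕ} (S : Finset (Fin m)) (C' : Finset (Fin m × Fin k))
    (p : Fin m × Fin k) :
    upmap m k p ∈ C'.image (upmap m k) ∪ S.image (fun a => (a, Fin.last k)) ↔ p ∈ C' := by
  rw [Finset.mem_union, Finset.mem_image, Finset.mem_image]
  constructor
  · rintro (⟨q, hq, hqe⟩ | ⟨a, _, hae⟩)
    · rwa [← upmap_inj hqe]
    · exfalso
      have := congrArg (fun x : Fin m × Fin (k+1) => (x.2 : ℕ)) hae
      simp only [upmap, Fin.val_last, Fin.coe_castSucc] at this
      omega
  · intro hp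
    exact Or.inl ⟨p, hp, rfl⟩

lemma memb_last {m k : ℕ} (S : Finset (Fin m)) (C' : Finset (Fin m × Fin k))
    (a : Fin m) :
    (a, Fin.last k) ∈ C'.image (upmap m k) ∪ S.image (fun b => (b, Fin.last k)) ↔ a ∈ S := by
  rw [Finset.mem_union, Finset.mem_image, Finset.mem_image]
  constructor
  · rintro (⟨q, _, hqe⟩ | ⟨b, hb, hbe⟩)
    · exfalso
      have := congrArg (fun x : Fin m × Fin (k+1) => (x.2 : ℕ)) hqe
      simp only [upmap, Fin.val_last, Fin.coe_castSucc] at this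
      omega
    · rw [Prod.ext_iff] at hbe
      have : b = a := hbe.1
      rwa [← this]
  · intro ha
    exact Or.inr ⟨a, ha, rfl⟩

lemma memb_cases {m k : ℕ} (S : Finset (Fin m)) (C' : Finset (Fin m × Fin k))
    (p : Fin m × Fin (k+1))
    (hp : p ∈ C'.image (upmap m k) ∪ S.image (fun a => (a, Fin.last k))) :
    (∃ q ∈ C', upmap m k q = p) ∨ ((p.2 : ℕ) = k ∧ p.1 ∈ S) := by
  rw [Finset.mem_union, Finset.mem_image, Finset.mem_image] at hp
  rcases hp with ⟨q, hq, hqe⟩ | ⟨a, ha, hae⟩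
  · exact Or.inl ⟨q, hq, hqe⟩
  · right
    rw [Prod.ext_iff] at hae
    have h1 : a = p.1 := hae.1
    refine ⟨?_, by rw [← h1]; exact ha⟩
    have h2 : Fin.last k = p.2 := hae.2
    rw [← h2]
    simp

lemma forward {m k : ℕ} (hk : 1 ≤ k) {S : Finset (Fin m)} {C : Finset (Fin m × Fin (k+1))}
    (hC : Pprop m (k+1) S C) :
    Pprop m k (scol C) (cres C) ∧ ((scol C) ∩ S).Nonempty := by
  obtain ⟨hconn, hmeet, hlast⟩ := hC
  rw [isConnSet_iff] at hconn
  have hlast' : ∀ i (j : Fin (k+1)), (j : ℕ) = k → ((i, j) ∈ C ↔ i ∈ S) :=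
    fun i j hj => hlast i j (by omega)
  have hmeet' : ∀ j : Fin k, ∃ i, (i, j) ∈ cres C := by
    intro j
    obtain ⟨i, hi⟩ := hmeet j.castSucc
    exact ⟨i, by rw [cres, Finset.mem_filter]; exact ⟨Finset.mem_univ _, hi⟩⟩
  have hup : ∀ p : Fin m × Fin k, p ∈ cres C → upmap m k p ∈ C := by
    intro p hp; rw [cres, Finset.mem_filter] at hp; exact hp.2
  refine ⟨⟨?_, hmeet', ?_⟩, ?_⟩
  · rw [isConnSet_iff]
    obtain ⟨i0, hi0⟩ := hmeet' ⟨0, hk⟩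
    refine ⟨⟨(i0, ⟨0, hk⟩), hi0⟩, ?_⟩
    intro u hu v hv
    have h1 : RIn (compG m (k+1)) ↑C (upmap m k u) (upmap m k v) :=
      hconn.2 _ (hup u hu) _ (hup v hv)
    have h2 := (proj_RIn hk h1 (by simp [upmap])).1 (by simp [upmap])
    exact RIn_down h2 u v rfl rfl
  · intro i j hj
    have hcast : j.castSucc = (⟨k-1, by omega⟩ : Fin (k+1)) := Fin.ext (by simpa using hj)
    rw [cres, Finset.mem_filter, scol, Finset.mem_filter]
    simp only [Finset.mem_univ, true_and]
    show (i, j.castSucc) ∈ C ↔ _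
    rw [hcast]
  · obtain ⟨s, hsC⟩ := hmeet (Fin.last k)
    have hsS : s ∈ S := (hlast' s (Fin.last k) (by simp)).mp hsC
    obtain ⟨i0, hi0⟩ := hmeet (⟨0, by omega⟩ : Fin (k+1))
    have h1 : RIn (compG m (k+1)) ↑C (i0, (⟨0, by omega⟩ : Fin (k+1))) (s, Fin.last k) :=
      hconn.2 _ hi0 _ hsC
    obtain ⟨a, haK, haL, -⟩ := (proj_RIn hk h1 (by simp; omega)).2 (by simp)
    refine ⟨a, Finset.mem_inter.mpr ⟨?_, (hlast' a (Fin.last k) (by simp)).mp haL⟩⟩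
    rw [scol, Finset.mem_filter]
    exact ⟨Finset.mem_univ _, haK⟩
lemma backward {m k : ℕ} (hk : 1 ≤ k) {S S' : Finset (Fin m)} {C' : Finset (Fin m × Fin k)}
    (hne : (S' ∩ S).Nonempty) (hC' : Pprop m k S' C') :
    Pprop m (k+1) S (C'.image (upmap m k) ∪ S.image (fun a => (a, Fin.last k))) := by
  obtain ⟨hconn, hmeet, hlast⟩ := hC'
  rw [isConnSet_iff] at hconn
  obtain ⟨t, ht⟩ := hne
  rw [Finset.mem_inter] at ht
  set Cb := C'.image (upmap m k) ∪ S.image (fun a => (a, Fin.last k)) with hCb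
  have hsub : ∀ p ∈ C', upmap m k p ∈ Cb := fun p hp => (memb_up S C' p).mpr hp
  -- the anchor vertex
  have htC' : (t, (⟨k-1, by omega⟩ : Fin k)) ∈ C' :=
    (hlast t ⟨k-1, by omega⟩ rfl).mpr ht.1
  set pt : Fin m × Fin (k+1) := upmap m k (t, ⟨k-1, by omega⟩) with hpt
  have hptCb : pt ∈ Cb := hsub _ htC'
  have htlast : (t, Fin.last k) ∈ Cb := (memb_last S C' t).mpr ht.2
  have hstep : RIn (compG m (k+1)) ↑Cb pt (t, Fin.last k) := by
    refine RIn.single hptCb htlast ?_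
    rw [compG_adj_s9]
    constructor
    · intro hcon
      have := congrArg (fun x : Fin m × Fin (k+1) => (x.2 : ℕ)) hcon
      simp only [hpt, upmap, Fin.coe_castSucc, Fin.val_last] at this
      omega
    · refine Or.inr ⟨rfl, Or.inl ?_⟩
      simp only [hpt, upmap, Fin.coe_castSucc, Fin.val_last]
      omega
  have claim : ∀ u ∈ Cb, RIn (compG m (k+1)) ↑Cb pt u := by
    intro u hu
    rcases memb_cases S C' u hu with ⟨q, hq, rfl⟩ | ⟨hu2, hu1⟩
    · exact RIn_up hsub (hconn.2 _ htC' _ hq)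
    · have hueq : u = (u.1, Fin.last k) := by
        rw [Prod.ext_iff]
        exact ⟨rfl, Fin.ext (by simpa using hu2)⟩
      rcases eq_or_ne u.1 t with hut | hut
      · rw [hueq, hut]; exact hstep
      · refine Relation.ReflTransGen.tail hstep ?_
        refine ⟨htlast, hu, ?_⟩
        rw [compG_adj_s9]
        constructor
        · intro hcon
          rw [Prod.ext_iff] at hcon
          exact hut hcon.1.symm
        · rw [hueq]
          exact Or.inl rfl
  refine ⟨?_, ?_, ?_⟩
  · rw [isConnSet_iff]
    refine ⟨⟨pt, hptCb⟩, fun u hu v hv => ?_⟩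
    exact Relation.ReflTransGen.trans (RIn_symm (claim u hu)) (claim v hv)
  · intro j
    by_cases hj : (j : ℕ) = k
    · have : j = Fin.last k := Fin.ext (by simpa using hj)
      rw [this]
      exact ⟨t, htlast⟩
    · have hjk : (j : ℕ) < k := by have := j.isLt; omega
      obtain ⟨i, hi⟩ := hmeet ⟨(j : ℕ), hjk⟩
      refine ⟨i, ?_⟩
      have : upmap m k (i, ⟨(j : ℕ), hjk⟩) = (i, j) := by
        rw [upmap, Prod.ext_iff]
        exact ⟨rfl, Fin.ext rfl⟩
      rw [← this]
      exact hsub _ hi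
  · intro i j hj
    have : j = Fin.last k := Fin.ext (by simpa using hj)
    rw [this]
    exact memb_last S C' i

lemma recover {m k : ℕ} {S : Finset (Fin m)} {C : Finset (Fin m × Fin (k+1))}
    (hlast : ∀ (i : Fin m) (j : Fin (k+1)), (j : ℕ) = (k+1) - 1 → ((i, j) ∈ C ↔ i ∈ S)) :
    (cres C).image (upmap m k) ∪ S.image (fun a => (a, Fin.last k)) = C := by
  ext p
  by_cases hp : (p.2 : ℕ) = k
  · have hpeq : p = (p.1, Fin.last k) := by
      rw [Prod.ext_iff]; exact ⟨rfl, Fin.ext (by simpa using hp)⟩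
    rw [hpeq, memb_last]
    exact (hlast p.1 (Fin.last k) (by simp)).symm
  · have hpk : (p.2 : ℕ) < k := by have := p.2.isLt; omega
    have hpeq : p = upmap m k (p.1, ⟨(p.2 : ℕ), hpk⟩) := by
      rw [upmap, Prod.ext_iff]; exact ⟨rfl, Fin.ext rfl⟩
    rw [hpeq, memb_up, cres, Finset.mem_filter]
    simp only [Finset.mem_univ, true_and]

lemma cres_eq {m k : ℕ} (S : Finset (Fin m)) (C' : Finset (Fin m × Fin k)) :
    cres (C'.image (upmap m k) ∪ S.image (fun a => (a, Fin.last k))) = C' := by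
  ext p
  rw [cres, Finset.mem_filter]
  simp only [Finset.mem_univ, true_and]
  exact memb_up S C' p

lemma scol_eq {m k : ℕ} (hk : 1 ≤ k) {S' : Finset (Fin m)} {C' : Finset (Fin m × Fin k)}
    (S : Finset (Fin m))
    (hlast : ∀ (i : Fin m) (j : Fin k), (j : ℕ) = k - 1 → ((i, j) ∈ C' ↔ i ∈ S')) :
    scol (C'.image (upmap m k) ∪ S.image (fun a => (a, Fin.last k))) = S' := by
  ext a
  rw [scol, Finset.mem_filter]
  simp only [Finset.mem_univ, true_and]
  have : ((⟨k-1, by omega⟩ : Fin (k+1))) = Fin.castSucc (⟨k-1, by omega⟩ : Fin k) :=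
    Fin.ext rfl
  rw [this]
  show upmap m k (a, ⟨k-1, by omega⟩) ∈ _ ↔ _
  rw [memb_up]
  exact hlast a _ rfl
lemma natCard_sigma {ι : Type} [Fintype ι] (f : ι → Type) [∀ i, Finite (f i)] :
    Nat.card ((i : ι) × f i) = ∑ i, Nat.card (f i) := by
  classical
  letI : ∀ i, Fintype (f i) := fun i => Fintype.ofFinite _
  simp [Nat.card_eq_fintype_card, Fintype.card_sigma]

lemma Fcnt_succ' {m k : ℕ} (hk : 1 ≤ k) (S : Finset (Fin m)) :
    Fcnt m (k + 1) S =
      ∑ S' ∈ (Finset.univ : Finset (Finset (Fin m))).filter (fun S' => (S' ∩ S).Nonempty),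
        Fcnt m k S' := by
  classical
  have key : Fcnt m (k+1) S = Nat.card ((S' : {S' : Finset (Fin m) // (S' ∩ S).Nonempty}) ×
      {C' : Finset (Fin m × Fin k) // Pprop m k S'.1 C'}) := by
    rw [Fcnt_eq]
    refine Nat.card_congr ⟨
      fun C => ⟨⟨scol C.1, (forward hk C.2).2⟩, ⟨cres C.1, (forward hk C.2).1⟩⟩,
      fun q => ⟨q.2.1.image (upmap m k) ∪ S.image (fun a => (a, Fin.last k)),
        backward hk q.1.2 q.2.2⟩, ?_, ?_⟩
    · intro C
      exact Subtype.ext (recover C.2.2.2)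
    · rintro ⟨⟨S', hS'⟩, ⟨C', hC'⟩⟩
      have h1 := scol_eq hk (S := S) hC'.2.2
      have h2 := cres_eq S C'
      dsimp only
      refine Sigma.ext (Subtype.ext h1) ?_
      rw [Subtype.heq_iff_coe_eq]
      · exact h2
      · intro x
        dsimp only
        rw [h1]
  rw [key, natCard_sigma]
  exact (Finset.sum_subtype _ (fun x => by simp) (fun S' => Fcnt m k S')).symm
lemma Tmat_apply {m : ℕ} (S : Finset (Fin m)) (hS : S.Nonempty) (h : S.card - 1 < m)
    (j : Fin m) :
    Tmat m ⟨S.card - 1, h⟩ j = Nat.choose m ((j : ℕ)+1) - Nat.choose (m - S.card) ((j : ℕ)+1) := by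
  have hc1 : 1 ≤ S.card := Finset.card_pos.mpr hS
  have heq : m - (S.card - 1 + 1) = m - S.card := by omega
  rw [Tmat]
  dsimp only
  split
  · rw [heq]
  · rename_i hcond
    rw [heq] at hcond
    rw [Nat.choose_eq_zero_of_lt (show m - S.card < (j : ℕ) + 1 by omega), Nat.sub_zero]

lemma Fcnt_eq_aux' {m : ℕ} (n : ℕ) : ∀ (S : Finset (Fin m)), S.Nonempty →
    ∀ (h : S.card - 1 < m),
    Fcnt m (n+1) S = ((Tmat m) ^ n).mulVec (fun _ => 1) ⟨S.card - 1, h⟩ := by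
  classical
  induction n with
  | zero =>
    intro S hS h
    rw [Fcnt_one_s9 S hS]
    simp [Matrix.one_mulVec]
  | succ n ih =>
    intro S hS h
    have hm : 0 < m := by omega
    have hidx : ∀ S' : Finset (Fin m), S'.card - 1 < m := by
      intro S'
      have := Finset.card_le_univ S'
      rw [Fintype.card_fin] at this
      omega
    have hc1 : 1 ≤ S.card := Finset.card_pos.mpr hS
    set w : Fin m → ℕ := ((Tmat m) ^ n).mulVec (fun _ => 1) with hw
    set A : Finset (Finset (Fin m)) :=
      Finset.univ.filter (fun S' => (S' ∩ S).Nonempty) with hA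
    have step1 : Fcnt m (n+2) S = ∑ S' ∈ A, w ⟨S'.card - 1, hidx S'⟩ := by
      rw [Fcnt_succ' (by omega) S]
      refine Finset.sum_congr rfl (fun S' hS' => ?_)
      rw [hA, Finset.mem_filter] at hS'
      obtain ⟨x, hx⟩ := hS'.2
      rw [Finset.mem_inter] at hx
      exact ih S' ⟨x, hx.1⟩ (hidx S')
    have step2 : ∑ S' ∈ A, w ⟨S'.card - 1, hidx S'⟩
        = ∑ j : Fin m, ∑ S' ∈ A.filter (fun S' => (⟨S'.card - 1, hidx S'⟩ : Fin m) = j),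
            w ⟨S'.card - 1, hidx S'⟩ :=
      (Finset.sum_fiberwise A (fun S' => (⟨S'.card - 1, hidx S'⟩ : Fin m)) _).symm
    have step3 : ∀ j : Fin m,
        A.filter (fun S' => (⟨S'.card - 1, hidx S'⟩ : Fin m) = j)
          = Finset.univ.filter (fun S' => S'.card = (j : ℕ) + 1 ∧ (S' ∩ S).Nonempty) := by
      intro j
      ext S'
      rw [Finset.mem_filter, hA, Finset.mem_filter, Finset.mem_filter]
      simp only [Finset.mem_univ, true_and]
      constructor
      · rintro ⟨hne, hje⟩
        obtain ⟨x, hx⟩ := hne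
        rw [Finset.mem_inter] at hx
        have hpos : 0 < S'.card := Finset.card_pos.mpr ⟨x, hx.1⟩
        have := congrArg Fin.val hje
        simp only at this
        exact ⟨by omega, ⟨x, Finset.mem_inter.mpr hx⟩⟩
      · rintro ⟨hcard, hne⟩
        exact ⟨hne, Fin.ext (by simp only; omega)⟩
    have step4 : ∀ j : Fin m,
        ∑ S' ∈ A.filter (fun S' => (⟨S'.card - 1, hidx S'⟩ : Fin m) = j),
            w ⟨S'.card - 1, hidx S'⟩
          = Tmat m ⟨S.card - 1, h⟩ j * w j := by
      intro j
      have hval : ∀ S' ∈ A.filter (fun S' => (⟨S'.card - 1, hidx S'⟩ : Fin m) = j),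
          w ⟨S'.card - 1, hidx S'⟩ = w j := by
        intro S' hS'
        rw [Finset.mem_filter] at hS'
        rw [hS'.2]
      rw [Finset.sum_congr rfl hval, Finset.sum_const, smul_eq_mul, step3 j, card_meets,
        Tmat_apply S hS h]
    rw [step1, step2, Finset.sum_congr rfl (fun j _ => step4 j)]
    rw [pow_succ', ← Matrix.mulVec_mulVec]
    simp [Matrix.mulVec, dotProduct, hw]

lemma Fcnt_eq_aux {m : ℕ} (k : ℕ) (hk : 1 ≤ k) (S : Finset (Fin m)) (hS : S.Nonempty)
    (h : S.card - 1 < m) :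
    Fcnt m k S = ((Tmat m) ^ (k - 1)).mulVec (fun _ => 1) ⟨S.card - 1, h⟩ := by
  obtain ⟨n, rfl⟩ : ∃ n, k = n + 1 := ⟨k - 1, by omega⟩
  simpa using Fcnt_eq_aux' n S hS h
theorem f_vector_eq_transfer (m k : ℕ) (hk : 1 ≤ k) (i : Fin m) :
    Fcnt m k (canon m ((i : ℕ) + 1)) =
      ((Tmat m) ^ (k - 1)).mulVec (fun _ => 1) i := by
  have hcard : (canon m ((i : ℕ) + 1)).card = (i : ℕ) + 1 := by
    have : canon m ((i : ℕ) + 1)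
        = Finset.image (fun a : Fin ((i : ℕ)+1) => Fin.castLE (by omega) a) Finset.univ := by
      ext a
      simp only [canon, Finset.mem_filter, Finset.mem_univ, true_and, Finset.mem_image]
      constructor
      · intro h; exact ⟨⟨a, h⟩, by ext; simp⟩
      · rintro ⟨b, rfl⟩; simpa using b.2
    rw [this, Finset.card_image_of_injective _ (Fin.castLE_injective _)]
    simp
  have hne : (canon m ((i : ℕ) + 1)).Nonempty := by
    refine ⟨⟨0, i.pos⟩, ?_⟩
    simp [canon]; exact Nat.zero_le _
  have h : (canon m ((i : ℕ) + 1)).card - 1 < m := by rw [hcard]; simpa using i.2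
  rw [Fcnt_eq_aux k hk _ hne h]
  congr 1
  ext
  simp [hcard]
end

section
/- Let C be a connected set of K_m × P_n (n ≥ 2) containing at least one vertex in each column, with S_n = C ∩ I_n. If some connected component of the subgraph of P_m × P_n induced by S_n is also a connected component of the subgraph of P_m × P_n induced by S_n ∪ (C ∩ I_{n-1}), then S_n is not a connected set of P_m × P_n and C is not a connected set of P_m × P_n. -/
open SimpleGraph Matrix

/-- A is a connected component (maximal connected subset) of the subgraph of G induced by X. -/
def IsCompOf {V : Type} (G : SimpleGraph V) (X A : Set V) : Prop :=
  A.Nonempty ∧ A ⊆ X ∧ (G.induce A).Connected ∧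
    ∀ B : Set V, A ⊆ B → B ⊆ X → (G.induce B).Connected → B = A


lemma crossing_lemma {V : Type} (G : SimpleGraph V) {X A : Set V}
    (hX : (G.induce X).Connected) {a b : V} (ha : a ∈ X) (hb : b ∈ X)
    (haA : a ∈ A) (hbA : b ∉ A) :
    ∃ u v, u ∈ A ∧ v ∈ X ∧ v ∉ A ∧ G.Adj u v := by
  obtain ⟨w⟩ := hX ⟨a, ha⟩ ⟨b, hb⟩
  obtain ⟨d, _, hd1, hd2⟩ := w.exists_boundary_dart {v : X | (v : V) ∈ A} haA hbA
  exact ⟨d.fst, d.snd, hd1, d.snd.2, hd2, d.adj⟩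

lemma insert_conn {V : Type} (G : SimpleGraph V) {A : Set V}
    (h : (G.induce A).Connected) {a b : V} (ha : a ∈ A) (hab : G.Adj a b) :
    (G.induce (insert b A)).Connected := by
  have he : insert b A = {a, b} ∪ A := by
    ext x; simp only [Set.mem_insert_iff, Set.mem_union, Set.mem_singleton_iff]
    constructor
    · rintro (h | h) <;> tauto
    · rintro ((h | h) | h) <;> subst_eqs <;> tauto
  rw [he]
  exact induce_union_connected (induce_pair_connected_of_adj hab).preconnected h.preconnected ⟨a, by simp, ha⟩

theorem component_obstruction (m n : ℕ) (hn : 2 ≤ n)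
    (C : Finset (Fin m × Fin n)) (hC : IsConnSet (compG m n) C)
    (hcol : ∀ j : Fin n, ∃ i : Fin m, (i, j) ∈ C)
    (Sn Tn1 : Set (Fin m × Fin n))
    (hSn : Sn = {v | v ∈ C ∧ (v.2 : ℕ) = n - 1})
    (hTn1 : Tn1 = {v | v ∈ C ∧ (v.2 : ℕ) = n - 2})
    (hcomp : ∃ A : Set (Fin m × Fin n),
      IsCompOf (gridG m n) Sn A ∧ IsCompOf (gridG m n) (Sn ∪ Tn1) A) :
    ¬ ((gridG m n).induce Sn).Connected ∧
      ¬ ((gridG m n).induce (C : Set (Fin m × Fin n))).Connected := by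
  obtain ⟨A, ⟨hAne, hASn, hAconn, hAmax⟩, ⟨_, hAsub', _, hAmax'⟩⟩ := hcomp
  -- key: no grid edge from A to (Sn ∪ Tn1) \ A
  have hK : ∀ a b, a ∈ A → b ∈ Sn ∪ Tn1 → (gridG m n).Adj a b → b ∈ A := by
    intro a b haA hbST hab
    have hBconn := insert_conn (gridG m n) hAconn haA hab
    have hBsub : insert b A ⊆ Sn ∪ Tn1 := by
      intro x hx
      rcases hx with rfl | hx
      · exact hbST
      · exact Or.inl (hASn hx)
    have := hAmax' (insert b A) (Set.subset_insert _ _) hBsub hBconn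
    rw [← this]; exact Set.mem_insert _ _
  -- base point in column 0
  obtain ⟨i0, hi0⟩ := hcol ⟨0, by omega⟩
  have hb0 : ((i0, (⟨0, by omega⟩ : Fin n)) : Fin m × Fin n) ∉ Sn := by
    rw [hSn]; intro ⟨_, h⟩; simp at h; omega
  obtain ⟨a0, ha0A⟩ := hAne
  have ha0Sn : a0 ∈ Sn := hASn ha0A
  have ha0C : a0 ∈ C := by rw [hSn] at ha0Sn; exact ha0Sn.1
  have ha0col : (a0.2 : ℕ) = n - 1 := by rw [hSn] at ha0Sn; exact ha0Sn.2
  constructor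
  · -- Sn not grid-connected
    intro hSc
    have hASneq : Sn = A := hAmax Sn hASn (le_refl _) hSc
    -- crossing edge in compG from Sn to C \ Sn
    have hb0A : ((i0, (⟨0, by omega⟩ : Fin n)) : Fin m × Fin n) ∉ Sn := hb0
    obtain ⟨u, v, huSn, hvC, hvSn, huv⟩ :=
      crossing_lemma (compG m n) hC.2 (Finset.mem_coe.mpr ha0C)
        (Finset.mem_coe.mpr hi0) (hASneq ▸ ha0Sn : a0 ∈ Sn) hb0A
    have hucol : (u.2 : ℕ) = n - 1 := by rw [hSn] at huSn; exact huSn.2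
    rw [compG, SimpleGraph.fromRel_adj] at huv
    obtain ⟨hne, hrel⟩ := huv
    have hvcol : (v.2 : ℕ) = n - 2 ∧ v.1 = u.1 := by
      rcases hrel with (⟨h1, _⟩ | ⟨h1, h2⟩) | (⟨h1, _⟩ | ⟨h1, h2⟩)
      · exact absurd (by rw [hSn]; exact ⟨hvC, by rw [← h1]; exact hucol⟩) hvSn
      · have := v.2.isLt; omega
      · exact absurd (by rw [hSn]; exact ⟨hvC, by rw [h1]; exact hucol⟩) hvSn
      · exact ⟨by omega, h1⟩
    have hvT : v ∈ Tn1 := by rw [hTn1]; exact ⟨hvC, hvcol.1⟩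
    have hadj : (gridG m n).Adj u v := by
      rw [gridG, SimpleGraph.fromRel_adj]
      exact ⟨hne, Or.inr (Or.inr ⟨hvcol.2, by omega⟩)⟩
    have := hK u v (hASneq ▸ huSn) (Or.inr hvT) hadj
    rw [← hASneq] at this
    exact hvSn this
  · -- C not grid-connected
    intro hCc
    have hb0A : ((i0, (⟨0, by omega⟩ : Fin n)) : Fin m × Fin n) ∉ A :=
      fun h => hb0 (hASn h)
    obtain ⟨u, v, huA, hvC, hvA, huv⟩ :=
      crossing_lemma (gridG m n) hCc (Finset.mem_coe.mpr ha0C)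
        (Finset.mem_coe.mpr hi0) ha0A hb0A
    have huSn : u ∈ Sn := hASn huA
    have hucol : (u.2 : ℕ) = n - 1 := by rw [hSn] at huSn; exact huSn.2
    rw [gridG, SimpleGraph.fromRel_adj] at huv
    obtain ⟨hne, hrel⟩ := huv
    have hvST : v ∈ Sn ∪ Tn1 := by
      rcases hrel with (⟨h1, _⟩ | ⟨h1, h2⟩) | (⟨h1, _⟩ | ⟨h1, h2⟩)
      · exact Or.inl (by rw [hSn]; exact ⟨hvC, by rw [← h1]; exact hucol⟩)
      · have := v.2.isLt; omega
      · exact Or.inl (by rw [hSn]; exact ⟨hvC, by rw [h1]; exact hucol⟩)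
      · exact Or.inr (by rw [hTn1]; exact ⟨hvC, by omega⟩)
    have hadj : (gridG m n).Adj u v := by
      rw [gridG, SimpleGraph.fromRel_adj]; exact ⟨hne, hrel⟩
    exact hvA (hK u v huA hvST hadj)
end
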